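/- If z ∈ ℍ is a zero of the monic quaternionic polynomial p(μ) = μᵏ + a_{k−1}μ^{k−1} + ⋯ + a₀ with k ≥ 4, then |z| ≤ ( 1 + (1/2)[ β₁² + β₂² + √((β₁² + β₂²)² + 4(2β₁β₂ + 1)) ] )^{1/4}, where β₁² = (1/2)[ Σ_{i=0}^{k−3}(|aᵢ|² + |bᵢ|²) + √((Σ_{i=0}^{k−3}(|aᵢ|² − |bᵢ|²))² + 4|Σ_{i=0}^{k−3} aᵢ b̄ᵢ|²) ], β₂² = (1/2)[ Σ_{i=k−2}^{k−1}(|aᵢ|² + |bᵢ|²) + √((Σ_{i=k−2}^{k−1}(|aᵢ|² − |bᵢ|²))² + 4|Σ_{i=k−2}^{k−1} aᵢ b̄ᵢ|²) ], and bᵢ = a_{k−1}aᵢ − a_{i−1} with a_{−1} = 0. -/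

import Mathlib

open scoped Matrix Quaternion BigOperators

noncomputable section

/-- Euclidean norm of a vector with entries in a normed ring (e.g. the quaternions). -/
def qVecNorm {R : Type*} [NormedRing R] {n : Type*} [Fintype n] (x : n → R) : ℝ :=
  Real.sqrt (∑ i, ‖x i‖ ^ 2)

/-- Operator 2-norm (spectral norm) of a matrix over a normed ring. -/
def qSpecNorm {R : Type*} [NormedRing R] {m n : Type*} [Fintype m] [Fintype n]
    (A : Matrix m n R) : ℝ :=
  sSup {c : ℝ | ∃ x : n → R, x ≠ 0 ∧ c = qVecNorm (A.mulVec x) / qVecNorm x}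

/-- `μ` is a right eigenvalue of the quaternionic matrix `A`. -/
def RightEig {n : Type*} [Fintype n] (A : Matrix n n ℍ[ℝ]) (μ : ℍ[ℝ]) : Prop :=
  ∃ x : n → ℍ[ℝ], x ≠ 0 ∧ A.mulVec x = fun i => x i * μ

/-- Right spectral radius of a quaternionic matrix. -/
def rSpecRad {n : Type*} [Fintype n] (A : Matrix n n ℍ[ℝ]) : ℝ :=
  sSup {r : ℝ | ∃ μ : ℍ[ℝ], RightEig A μ ∧ r = ‖μ‖}

/-- Spectral radius of a real 2×2 matrix. -/
def realSpecRad (B : Matrix (Fin 2) (Fin 2) ℝ) : ℝ :=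
  sSup {r : ℝ | ∃ μ ∈ spectrum ℝ B, r = |μ|}

/-- `bᵢ = a_{k-1} aᵢ - a_{i-1}` with `a_{-1} = 0`. -/
def bseq (k : ℕ) (a : ℕ → ℍ[ℝ]) (i : ℕ) : ℍ[ℝ] :=
  a (k - 1) * a i - (if i = 0 then 0 else a (i - 1))

/-- `cᵢ = -a_{k-1} bᵢ + a_{k-2} aᵢ - a_{i-2}` with `a_{-1} = a_{-2} = 0`. -/
def cseq (k : ℕ) (a : ℕ → ℍ[ℝ]) (i : ℕ) : ℍ[ℝ] :=
  -(a (k - 1) * bseq k a i) + a (k - 2) * a i - (if i ≤ 1 then 0 else a (i - 2))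

/-- `z` is a zero of the monic quaternionic polynomial
`p(μ) = μᵏ + a_{k-1}μ^{k-1} + ⋯ + a₀` (coefficients on the left). -/
def IsPolyZero (k : ℕ) (a : ℕ → ℍ[ℝ]) (z : ℍ[ℝ]) : Prop :=
  (∑ i ∈ Finset.range k, a i * z ^ i) + z ^ k = 0


-- ===== auxiliary lemmas for zero_bound_two =====
set_option maxHeartbeats 1600000 in
private lemma zb_real2 (A B c p q : ℝ) (hA : 0 ≤ A) (hB : 0 ≤ B) (hc : 0 ≤ c) :
    p^2*A + q^2*B + 2*p*q*c ≤ ((1/2) * ((A+B)+Real.sqrt ((A-B)^2+4*c^2))) * (p^2+q^2) := by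
  set R := Real.sqrt ((A-B)^2+4*c^2) with hR
  have hR0 : 0 ≤ R := Real.sqrt_nonneg _
  have hR2 : R^2 = (A-B)^2+4*c^2 := Real.sq_sqrt (by positivity)
  set lam := (1/2)*((A+B)+R) with hlam
  have hlA : 0 ≤ lam - A := by
    have : A - B ≤ R := by nlinarith [sq_nonneg (R - (A-B))]
    simp only [hlam]; linarith
  have hlB : 0 ≤ lam - B := by
    have : B - A ≤ R := by nlinarith [sq_nonneg (R - (B-A))]
    simp only [hlam]; linarith
  have hprod : (lam - A) * (lam - B) = c^2 := by
    simp only [hlam]; nlinarith [hR2]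
  have hc' : c = Real.sqrt ((lam-A)*(lam-B)) := by
    rw [hprod]; exact (Real.sqrt_sq hc).symm
  have h1 : 2*p*q*c ≤ p^2*(lam-A) + q^2*(lam-B) := by
    rw [hc', Real.sqrt_mul hlA]
    nlinarith [sq_nonneg (p * Real.sqrt (lam-A) - q * Real.sqrt (lam-B)),
      Real.sq_sqrt hlA, Real.sq_sqrt hlB, Real.sqrt_nonneg (lam-A), Real.sqrt_nonneg (lam-B)]
  nlinarith [h1]

private def zbReHom : ℍ[ℝ] →+ ℝ := AddMonoidHom.mk' (fun q => q.re) (fun _ _ => rfl)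

private lemma zb_re_le_norm (q : ℍ[ℝ]) : q.re ≤ ‖q‖ := by
  have h1 : Quaternion.normSq q = ‖q‖ * ‖q‖ := Quaternion.normSq_eq_norm_mul_self q
  have h2 : Quaternion.normSq q = q.re^2 + q.imI^2 + q.imJ^2 + q.imK^2 :=
    Quaternion.normSq_def' q
  nlinarith [norm_nonneg q, sq_nonneg q.imI, sq_nonneg q.imJ, sq_nonneg q.imK,
    sq_nonneg (q.re - ‖q‖)]

set_option maxHeartbeats 1600000 in
private lemma zb_key_cs (s : Finset ℕ) (a b v : ℕ → ℍ[ℝ]) (u : ℕ → ℝ)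
    (hu : ∀ i ∈ s, ‖v i‖ ≤ u i) :
    Real.sqrt (‖∑ i ∈ s, a i * v i‖^2 + ‖∑ i ∈ s, b i * v i‖^2) ≤
    Real.sqrt ((1/2) * ((∑ i ∈ s, (‖a i‖^2 + ‖b i‖^2)) +
      Real.sqrt ((∑ i ∈ s, (‖a i‖^2 - ‖b i‖^2))^2 + 4*‖∑ i ∈ s, a i * star (b i)‖^2))) *
      Real.sqrt (∑ i ∈ s, u i^2) := by
  set x := ∑ i ∈ s, a i * v i with hx
  set y := ∑ i ∈ s, b i * v i with hy
  set A := ∑ i ∈ s, ‖a i‖^2 with hA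
  set B := ∑ i ∈ s, ‖b i‖^2 with hB
  set C := ∑ i ∈ s, a i * star (b i) with hC
  have hAB1 : (∑ i ∈ s, (‖a i‖^2 + ‖b i‖^2)) = A + B := Finset.sum_add_distrib
  have hAB2 : (∑ i ∈ s, (‖a i‖^2 - ‖b i‖^2)) = A - B := Finset.sum_sub_distrib _ _
  rw [hAB1, hAB2]
  set lam := (1/2) * ((A + B) + Real.sqrt ((A-B)^2 + 4*‖C‖^2)) with hlam
  have hA0 : 0 ≤ A := Finset.sum_nonneg (fun i _ => sq_nonneg _)
  have hB0 : 0 ≤ B := Finset.sum_nonneg (fun i _ => sq_nonneg _)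
  have hlam0 : 0 ≤ lam := by
    have := Real.sqrt_nonneg ((A-B)^2 + 4*‖C‖^2)
    simp only [hlam]; positivity
  set r := Real.sqrt (‖x‖^2 + ‖y‖^2) with hr
  rcases eq_or_lt_of_le (show (0:ℝ) ≤ r from Real.sqrt_nonneg _) with h0 | hrpos
  · rw [← h0]; positivity
  have hr2 : r^2 = ‖x‖^2 + ‖y‖^2 := Real.sq_sqrt (by positivity)
  have hrne : r ≠ 0 := ne_of_gt hrpos
  set α : ℍ[ℝ] := (r⁻¹ : ℝ) • star x with hα
  set βq : ℍ[ℝ] := (r⁻¹ : ℝ) • star y with hβ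
  have hnx : ‖α‖ = r⁻¹ * ‖x‖ := by
    rw [hα, norm_smul, Quaternion.norm_star, Real.norm_eq_abs, abs_of_pos (by positivity)]
  have hny : ‖βq‖ = r⁻¹ * ‖y‖ := by
    rw [hβ, norm_smul, Quaternion.norm_star, Real.norm_eq_abs, abs_of_pos (by positivity)]
  have hcomb : α * x + βq * y = ((r : ℝ) : ℍ[ℝ]) := by
    rw [hα, hβ, smul_mul_assoc, smul_mul_assoc, Quaternion.star_mul_self,
      Quaternion.star_mul_self, Quaternion.normSq_eq_norm_mul_self,
      Quaternion.normSq_eq_norm_mul_self, Quaternion.smul_coe, Quaternion.smul_coe,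
      ← Quaternion.coe_add]
    congr 1
    field_simp
    nlinarith [hr2]
  have hsum : α * x + βq * y = ∑ i ∈ s, (α * a i + βq * b i) * v i := by
    rw [hx, hy, Finset.mul_sum, Finset.mul_sum, ← Finset.sum_add_distrib]
    exact Finset.sum_congr rfl (fun i _ => by rw [add_mul, mul_assoc, mul_assoc])
  have hstep1 : r ≤ ∑ i ∈ s, ‖α * a i + βq * b i‖ * u i := by
    have h1 : r = ‖((r:ℝ) : ℍ[ℝ])‖ := by
      rw [Quaternion.norm_coe, Real.norm_eq_abs, abs_of_pos hrpos]
    rw [h1, ← hcomb, hsum]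
    refine (norm_sum_le _ _).trans ?_
    refine Finset.sum_le_sum (fun i hi => ?_)
    rw [norm_mul]
    exact mul_le_mul_of_nonneg_left (hu i hi) (norm_nonneg _)
  have hstep2 : ∑ i ∈ s, ‖α * a i + βq * b i‖ * u i ≤
      Real.sqrt (∑ i ∈ s, ‖α * a i + βq * b i‖^2) * Real.sqrt (∑ i ∈ s, u i^2) :=
    Real.sum_mul_le_sqrt_mul_sqrt s _ _
  have hexp : ∑ i ∈ s, ‖α * a i + βq * b i‖^2
      = ‖α‖^2 * A + ‖βq‖^2 * B + 2 * (α * C * star βq).re := by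
    have hterm : ∀ i ∈ s, ‖α * a i + βq * b i‖^2
        = ‖α‖^2 * ‖a i‖^2 + ‖βq‖^2 * ‖b i‖^2
          + 2 * (α * (a i * star (b i)) * star βq).re := by
      intro i _
      have e1 : ‖α * a i + βq * b i‖^2 = Quaternion.normSq (α * a i + βq * b i) := by
        rw [Quaternion.normSq_eq_norm_mul_self]; ring
      rw [e1, Quaternion.normSq_add]
      have e2 : Quaternion.normSq (α * a i) = ‖α‖^2 * ‖a i‖^2 := by
        rw [Quaternion.normSq_eq_norm_mul_self, norm_mul]; ring
      have e3 : Quaternion.normSq (βq * b i) = ‖βq‖^2 * ‖b i‖^2 := by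
        rw [Quaternion.normSq_eq_norm_mul_self, norm_mul]; ring
      have e4 : (α * a i) * star (βq * b i) = α * (a i * star (b i)) * star βq := by
        rw [star_mul, mul_assoc, mul_assoc, mul_assoc]
      rw [e2, e3, e4]
    rw [Finset.sum_congr rfl hterm, Finset.sum_add_distrib, Finset.sum_add_distrib,
      ← Finset.mul_sum, ← Finset.mul_sum]
    congr 1
    rw [← Finset.mul_sum]
    congr 1
    have hmapsum : (∑ i ∈ s, (α * (a i * star (b i)) * star βq)).re
        = ∑ i ∈ s, (α * (a i * star (b i)) * star βq).re := map_sum zbReHom _ s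
    rw [← hmapsum]
    congr 1
    rw [hC, Finset.mul_sum, Finset.sum_mul]
  have hone : (r⁻¹*‖x‖)^2 + (r⁻¹*‖y‖)^2 = 1 := by
    field_simp
    linarith [hr2]
  have hbound : ∑ i ∈ s, ‖α * a i + βq * b i‖^2 ≤ lam := by
    rw [hexp, hnx, hny]
    have hre2 : (α * C * star βq).re ≤ (r⁻¹*‖x‖) * ‖C‖ * (r⁻¹*‖y‖) := by
      refine (zb_re_le_norm _).trans ?_
      rw [norm_mul, norm_mul, Quaternion.norm_star, hnx, hny]
    have h2' := zb_real2 A B ‖C‖ (r⁻¹*‖x‖) (r⁻¹*‖y‖) hA0 hB0 (norm_nonneg _)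
    rw [hone, mul_one] at h2'
    rw [hlam]
    nlinarith [hre2, h2']
  calc r ≤ ∑ i ∈ s, ‖α * a i + βq * b i‖ * u i := hstep1
    _ ≤ Real.sqrt (∑ i ∈ s, ‖α * a i + βq * b i‖^2) * Real.sqrt (∑ i ∈ s, u i^2) := hstep2
    _ ≤ Real.sqrt lam * Real.sqrt (∑ i ∈ s, u i^2) :=
        mul_le_mul_of_nonneg_right (Real.sqrt_le_sqrt hbound) (Real.sqrt_nonneg _)

private lemma zb_mink4 (a b c d : ℝ) (ha : 0 ≤ a) (hb : 0 ≤ b) (hc : 0 ≤ c) (hd : 0 ≤ d) :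
    Real.sqrt ((a+b)^2+(c+d)^2) ≤ Real.sqrt (a^2+c^2) + Real.sqrt (b^2+d^2) := by
  have h1 : a*b + c*d ≤ Real.sqrt (a^2+c^2) * Real.sqrt (b^2+d^2) := by
    rw [← Real.sqrt_mul (by positivity)]
    exact Real.le_sqrt_of_sq_le (by nlinarith [sq_nonneg (a*d - b*c)])
  rw [show Real.sqrt (a^2+c^2) + Real.sqrt (b^2+d^2)
      = Real.sqrt ((Real.sqrt (a^2+c^2) + Real.sqrt (b^2+d^2))^2) from
    (Real.sqrt_sq (by positivity)).symm]
  apply Real.sqrt_le_sqrt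
  have e1 : Real.sqrt (a^2+c^2) ^ 2 = a^2+c^2 := Real.sq_sqrt (by positivity)
  have e2 : Real.sqrt (b^2+d^2) ^ 2 = b^2+d^2 := Real.sq_sqrt (by positivity)
  nlinarith [h1]

set_option maxHeartbeats 1600000 in
private lemma zb_final_poly (b1 b2 s R m : ℝ) (h1 : 0 ≤ b1) (h2 : 0 ≤ b2) (hs : 0 ≤ s)
    (hR0 : 0 ≤ R) (hR2 : R^2 = (b1^2+b2^2)^2+4*(2*b1*b2+1))
    (hm0 : 0 ≤ m) (hm2 : m^2 = (1/2)*(b1^2+b2^2+R))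
    (hh : s^4 + s^2 ≤ b1^2 + 2*b1*b2*s + b2^2*s^2) :
    s^2 ≤ (1/2)*(b1^2+b2^2+R) := by
  have hlam_eq' : m^4 = (b1^2+b2^2)*m^2 + 2*b1*b2 + 1 := by
    have h4 : m^4 = (m^2)^2 := by ring
    rw [h4, hm2]; linear_combination (1/4) * hR2
  have hRge2 : 2 ≤ R := by
    nlinarith [sq_nonneg (R-2), sq_nonneg (b1^2+b2^2), mul_nonneg h1 h2]
  have hlam1 : 1 ≤ m^2 := by rw [hm2]; nlinarith
  have hlb1 : b1^2 ≤ m^2 := by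
    rw [hm2]
    have : b2^2 - b1^2 ≤ R := by nlinarith [sq_nonneg (R - (b2^2-b1^2)), mul_nonneg h1 h2]
    nlinarith
  have hlb2 : b2^2 ≤ m^2 := by
    rw [hm2]
    have : b1^2 - b2^2 ≤ R := by nlinarith [sq_nonneg (R - (b1^2-b2^2)), mul_nonneg h1 h2]
    nlinarith
  rw [← hm2]
  by_contra hcon
  push_neg at hcon
  have hm1 : 1 ≤ m := by nlinarith [hlam1, hm0]
  have hsm : m < s := lt_of_pow_lt_pow_left₀ 2 hs hcon
  have hb1m : b1 ≤ m := le_of_pow_le_pow_left₀ (by norm_num) hm0 hlb1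
  have hb2m : b2 ≤ m := le_of_pow_le_pow_left₀ (by norm_num) hm0 hlb2
  have hm1' : (0:ℝ) < m + 1 := by linarith
  have e1 : 0 ≤ (m-1)*(b1*(m+1) - b2)^2 := mul_nonneg (by linarith) (sq_nonneg _)
  have e2 : 0 ≤ (m-1)*(m^2-b2^2) := mul_nonneg (by linarith) (by linarith)
  have keyA : (m+1)*(b1^2*(m^2-1) + m^2 - 2*b1*b2*(m-1))
      = (m-1)*(b1*(m+1) - b2)^2 + (m-1)*(m^2-b2^2) + 2*m^2 := by ring
  have hA : 2*b1*b2*(m-1) ≤ b1^2*(m^2-1) + m^2 := by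
    have hX : 0 ≤ (m+1)*(b1^2*(m^2-1) + m^2 - 2*b1*b2*(m-1)) := by
      rw [keyA]; have := sq_nonneg m; linarith [e1, e2]
    have := (mul_nonneg_iff_of_pos_left hm1').mp hX
    linarith
  have hhm : 1 ≤ m^4 + m^2 - b2^2*m^2 - 2*b1*b2*m - b1^2 := by
    nlinarith [hlam_eq', hA]
  have hq : m^2+1 ≤ s^2+m^2+1-b2^2 := by nlinarith [hcon, hlb2]
  have hprod : 2*m*(m^2+1) ≤ (s+m)*(s^2+m^2+1-b2^2) :=
    mul_le_mul (by linarith) hq (by positivity) (by linarith)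
  have hbb : b1*b2 ≤ m*m := mul_le_mul hb1m hb2m h2 hm0
  have hbr : 0 ≤ (s+m)*(s^2+m^2+1-b2^2) - 2*b1*b2 := by nlinarith [hprod, hbb, hm1, hm0]
  have key2 : s^4+s^2-b2^2*s^2-2*b1*b2*s - (m^4+m^2-b2^2*m^2-2*b1*b2*m)
      = (s-m)*((s+m)*(s^2+m^2+1-b2^2) - 2*b1*b2) := by ring
  nlinarith [mul_nonneg (le_of_lt (sub_pos.2 hsm)) hbr, key2, hhm, hh]

set_option maxHeartbeats 1600000 in
private lemma zb_step67 (t b1 b2 : ℝ) (k : ℕ) (hk : 4 ≤ k) (ht : 1 < t)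
    (hb1 : 0 ≤ b1) (hb2 : 0 ≤ b2)
    (H : Real.sqrt ((t^k)^2 + (t^(k+1))^2) ≤
        b1 * Real.sqrt (∑ i ∈ Finset.range (k-2), (t^i)^2)
        + b2 * Real.sqrt ((t^(k-2))^2 + (t^(k-1))^2)) :
    t^2 * Real.sqrt (t^4-1) ≤ b1 + b2 * Real.sqrt (t^4-1) := by
  have ht0 : (0:ℝ) < t := by linarith
  have ht20 : (0:ℝ) < t^2 - 1 := by nlinarith
  have htp : (0:ℝ) < t^(k-2) := pow_pos ht0 _
  have hsq : (0:ℝ) < Real.sqrt (t^2-1) := Real.sqrt_pos.mpr ht20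
  have ek : t^k = t^(k-2) * t^2 := by rw [← pow_add]; congr 1; omega
  have ek1 : t^(k+1) = t^(k-2) * t^3 := by rw [← pow_add]; congr 1; omega
  have ek2 : t^(k-1) = t^(k-2) * t := by rw [← pow_succ]; congr 1; omega
  have eL : Real.sqrt ((t^k)^2 + (t^(k+1))^2) = t^(k-2) * Real.sqrt (t^4 + t^6) := by
    rw [ek, ek1,
      show (t^(k-2)*t^2)^2 + (t^(k-2)*t^3)^2 = (t^(k-2))^2 * (t^4+t^6) from by ring,
      Real.sqrt_mul (sq_nonneg _), Real.sqrt_sq htp.le]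
  have hgs : (∑ i ∈ Finset.range (k-2), (t^i)^2) ≤ (t^(k-2))^2 / (t^2-1) := by
    have h1 : ∀ i, (t^i)^2 = (t^2)^i := by
      intro i; rw [← pow_mul, ← pow_mul, mul_comm]
    simp_rw [h1]
    rw [geom_sum_eq (by nlinarith : t^2 ≠ 1),
      show (t^2)^(k-2) = (t^(k-2))^2 from by rw [← pow_mul, ← pow_mul, mul_comm]]
    gcongr
    linarith
  have hgs' : Real.sqrt (∑ i ∈ Finset.range (k-2), (t^i)^2)
      ≤ t^(k-2) / Real.sqrt (t^2-1) := by
    refine (Real.sqrt_le_sqrt hgs).trans ?_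
    rw [Real.sqrt_div (sq_nonneg _), Real.sqrt_sq htp.le]
  have eQ : Real.sqrt ((t^(k-2))^2 + (t^(k-1))^2) = t^(k-2) * Real.sqrt (1 + t^2) := by
    rw [ek2, show (t^(k-2))^2 + (t^(k-2)*t)^2 = (t^(k-2))^2 * (1+t^2) from by ring,
      Real.sqrt_mul (sq_nonneg _), Real.sqrt_sq htp.le]
  have H2 : Real.sqrt (t^4+t^6) ≤ b1 / Real.sqrt (t^2-1) + b2 * Real.sqrt (1+t^2) := by
    rw [eL, eQ] at H
    have h3 : t^(k-2) * Real.sqrt (t^4+t^6)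
        ≤ t^(k-2) * (b1 / Real.sqrt (t^2-1) + b2 * Real.sqrt (1+t^2)) := by
      refine H.trans ?_
      have h5 := mul_le_mul_of_nonneg_left hgs' hb1
      rw [mul_add,
        show t^(k-2) * (b1 / Real.sqrt (t^2-1))
          = b1 * (t^(k-2)/Real.sqrt (t^2-1)) from by ring,
        show t^(k-2) * (b2 * Real.sqrt (1+t^2))
          = b2 * (t^(k-2) * Real.sqrt (1+t^2)) from by ring]
      exact add_le_add h5 le_rfl
    exact le_of_mul_le_mul_left h3 htp
  have H3 : Real.sqrt (t^4+t^6) * Real.sqrt (t^2-1)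
      ≤ b1 + b2 * (Real.sqrt (1+t^2) * Real.sqrt (t^2-1)) := by
    have := mul_le_mul_of_nonneg_right H2 hsq.le
    rwa [add_mul, div_mul_cancel₀ _ (ne_of_gt hsq), mul_assoc] at this
  have e5 : Real.sqrt (t^4+t^6) * Real.sqrt (t^2-1) = t^2 * Real.sqrt (t^4-1) := by
    rw [← Real.sqrt_mul (by positivity),
      show (t^4+t^6)*(t^2-1) = (t^2)^2*(t^4-1) from by ring,
      Real.sqrt_mul (sq_nonneg _), Real.sqrt_sq (by positivity)]
  have e6 : Real.sqrt (1+t^2) * Real.sqrt (t^2-1) = Real.sqrt (t^4-1) := by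
    rw [← Real.sqrt_mul (by positivity), show (1+t^2)*(t^2-1) = t^4-1 from by ring]
  rw [e5, e6] at H3
  exact H3

set_option maxHeartbeats 1600000 in
private lemma zb_wrap (t b1 b2 : ℝ) (ht : 0 ≤ t) (hb1 : 0 ≤ b1) (hb2 : 0 ≤ b2)
    (hkey : 1 < t → t^2 * Real.sqrt (t^4 - 1) ≤ b1 + b2 * Real.sqrt (t^4 - 1)) :
    t ≤ (1 + 1 / 2 * (b1 ^ 2 + b2 ^ 2 +
      Real.sqrt ((b1 ^ 2 + b2 ^ 2) ^ 2 + 4 * (2 * b1 * b2 + 1)))) ^ ((1:ℝ)/4) := by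
  have hR0 : 0 ≤ Real.sqrt ((b1 ^ 2 + b2 ^ 2) ^ 2 + 4 * (2 * b1 * b2 + 1)) :=
    Real.sqrt_nonneg _
  have hE1 : (1:ℝ) ≤ 1 + 1 / 2 * (b1 ^ 2 + b2 ^ 2 +
      Real.sqrt ((b1 ^ 2 + b2 ^ 2) ^ 2 + 4 * (2 * b1 * b2 + 1))) := by
    nlinarith [hR0, sq_nonneg b1, sq_nonneg b2]
  rcases le_or_gt t 1 with h | h
  · calc t ≤ 1 := h
      _ = (1:ℝ) ^ ((1:ℝ)/4) := (Real.one_rpow _).symm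
      _ ≤ _ := Real.rpow_le_rpow (by norm_num) hE1 (by norm_num)
  · have hs := hkey h
    have h4 : (0:ℝ) ≤ t^4 - 1 := by
      nlinarith [mul_pos (by nlinarith : (0:ℝ) < t^2-1) (by positivity : (0:ℝ) < t^2+1)]
    set s := Real.sqrt (t^4-1) with hsdef
    have hs2 : s^2 = t^4-1 := Real.sq_sqrt h4
    have hs0 : 0 ≤ s := Real.sqrt_nonneg _
    have hineq : s^4 + s^2 ≤ b1^2 + 2*b1*b2*s + b2^2*s^2 := by
      have h2 := mul_self_le_mul_self (mul_nonneg (by positivity) hs0) hs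
      nlinarith [hs2, h2]
    have hRnn : (0:ℝ) ≤ (b1^2+b2^2)^2+4*(2*b1*b2+1) := by
      nlinarith [mul_nonneg hb1 hb2, sq_nonneg (b1^2+b2^2)]
    have hR2 : (Real.sqrt ((b1^2+b2^2)^2+4*(2*b1*b2+1)))^2
        = (b1^2+b2^2)^2+4*(2*b1*b2+1) := Real.sq_sqrt hRnn
    have hmnn : (0:ℝ) ≤ (1/2)*(b1^2+b2^2+Real.sqrt ((b1^2+b2^2)^2+4*(2*b1*b2+1))) := by
      positivity
    have hm2 : (Real.sqrt ((1/2)*(b1^2+b2^2+Real.sqrt ((b1^2+b2^2)^2+4*(2*b1*b2+1)))))^2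
        = (1/2)*(b1^2+b2^2+Real.sqrt ((b1^2+b2^2)^2+4*(2*b1*b2+1))) := Real.sq_sqrt hmnn
    have hfin := zb_final_poly b1 b2 s _ _ hb1 hb2 hs0 hR0 hR2 (Real.sqrt_nonneg _) hm2 hineq
    have ht4 : t^4 ≤ 1 + 1 / 2 * (b1 ^ 2 + b2 ^ 2 +
        Real.sqrt ((b1 ^ 2 + b2 ^ 2) ^ 2 + 4 * (2 * b1 * b2 + 1))) := by
      nlinarith [hfin, hs2]
    calc t = (t^(4:ℕ) : ℝ) ^ ((1:ℝ)/4) := by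
          rw [← Real.rpow_natCast t 4, ← Real.rpow_mul ht]
          norm_num
      _ ≤ _ := Real.rpow_le_rpow (by positivity) ht4 (by norm_num)

private lemma zb_hzk_eq (k : ℕ) (hk : 1 ≤ k) (a : ℕ → ℍ[ℝ]) (z : ℍ[ℝ])
    (hz : IsPolyZero k a z) :
    z ^ (k+1) = ∑ i ∈ Finset.range k, bseq k a i * z ^ i := by
  have h0 : z ^ k = -(∑ i ∈ Finset.range k, a i * z ^ i) :=
    eq_neg_of_add_eq_zero_right hz
  obtain ⟨m, rfl⟩ : ∃ m, k = m + 1 := ⟨k - 1, by omega⟩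
  have hshift : ∑ i ∈ Finset.range (m+1), a i * z ^ (i+1)
      = (∑ i ∈ Finset.range (m+1), (if i = 0 then (0:ℍ[ℝ]) else a (i-1)) * z ^ i)
        + a m * z ^ (m+1) := by
    rw [Finset.sum_range_succ]
    congr 1
    rw [Finset.sum_range_succ' (fun i => (if i = 0 then (0:ℍ[ℝ]) else a (i-1)) * z ^ i) m]
    simp
  have hmul : z ^ (m+1+1) = -(∑ i ∈ Finset.range (m+1), a i * z ^ (i+1)) := by
    rw [pow_succ, h0, neg_mul, Finset.sum_mul, neg_inj]
    exact Finset.sum_congr rfl (fun i _ => by rw [mul_assoc, ← pow_succ])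
  have expand : ∑ i ∈ Finset.range (m+1), bseq (m+1) a i * z ^ i
      = (∑ i ∈ Finset.range (m+1), (a m * a i) * z ^ i)
        - ∑ i ∈ Finset.range (m+1), (if i = 0 then (0:ℍ[ℝ]) else a (i-1)) * z ^ i := by
    rw [← Finset.sum_sub_distrib]
    refine Finset.sum_congr rfl (fun i _ => ?_)
    rw [bseq, Nat.add_sub_cancel, sub_mul]
  rw [hmul, hshift, neg_add, expand, h0, mul_neg, neg_neg, Finset.mul_sum]
  rw [show ∀ w1 w2 : ℍ[ℝ], -w1 + w2 = w2 - w1 from fun _ _ => neg_add_eq_sub _ _]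
  congr 1
  exact Finset.sum_congr rfl (fun i _ => (mul_assoc _ _ _).symm)

private lemma zb_icc_sum {M : Type*} [AddCommMonoid M] (k : ℕ) (hk : 4 ≤ k) (f : ℕ → M) :
    ∑ i ∈ Finset.Icc (k-2) (k-1), f i = f (k-2) + f (k-1) := by
  have hIcc : Finset.Icc (k-2) (k-1) = {k-2, k-1} := by
    ext j; simp only [Finset.mem_Icc, Finset.mem_insert, Finset.mem_singleton]; omega
  rw [hIcc, Finset.sum_insert (by simp; omega), Finset.sum_singleton]

private lemma zb_split_sum {M : Type*} [AddCommMonoid M] (k : ℕ) (hk : 4 ≤ k) (f : ℕ → M) :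
    ∑ i ∈ Finset.range k, f i
      = (∑ i ∈ Finset.range (k-2), f i) + ∑ i ∈ Finset.Icc (k-2) (k-1), f i := by
  rw [zb_icc_sum k hk f]
  obtain ⟨m, rfl⟩ : ∃ m, k = m + 4 := ⟨k - 4, by omega⟩
  have e1 : m + 4 - 2 = (m+1) + 1 := by omega
  have e2 : m + 4 - 1 = (m+2) + 1 := by omega
  rw [e1, e2, show m + 4 = ((m+1)+1) + 1 + 1 from by omega]
  rw [Finset.sum_range_succ, Finset.sum_range_succ]
  rw [show (m+1)+1+1 = (m+2)+1 from by omega]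
  rw [add_assoc]

theorem zero_bound_two (k : ℕ) (hk : 4 ≤ k) (a : ℕ → ℍ[ℝ]) (z : ℍ[ℝ])
    (hz : IsPolyZero k a z) :
    ‖z‖ ≤ (1 + (1 / 2) *
      ((Real.sqrt ((1 / 2) * ((∑ i ∈ Finset.range (k - 2), (‖a i‖ ^ 2 + ‖bseq k a i‖ ^ 2)) +
          Real.sqrt ((∑ i ∈ Finset.range (k - 2), (‖a i‖ ^ 2 - ‖bseq k a i‖ ^ 2)) ^ 2 +
            4 * ‖∑ i ∈ Finset.range (k - 2), a i * star (bseq k a i)‖ ^ 2)))) ^ 2 +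
       (Real.sqrt ((1 / 2) * ((∑ i ∈ Finset.Icc (k - 2) (k - 1), (‖a i‖ ^ 2 + ‖bseq k a i‖ ^ 2)) +
          Real.sqrt ((∑ i ∈ Finset.Icc (k - 2) (k - 1), (‖a i‖ ^ 2 - ‖bseq k a i‖ ^ 2)) ^ 2 +
            4 * ‖∑ i ∈ Finset.Icc (k - 2) (k - 1), a i * star (bseq k a i)‖ ^ 2)))) ^ 2 +
       Real.sqrt (((Real.sqrt ((1 / 2) * ((∑ i ∈ Finset.range (k - 2), (‖a i‖ ^ 2 + ‖bseq k a i‖ ^ 2)) +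
            Real.sqrt ((∑ i ∈ Finset.range (k - 2), (‖a i‖ ^ 2 - ‖bseq k a i‖ ^ 2)) ^ 2 +
              4 * ‖∑ i ∈ Finset.range (k - 2), a i * star (bseq k a i)‖ ^ 2)))) ^ 2 +
          (Real.sqrt ((1 / 2) * ((∑ i ∈ Finset.Icc (k - 2) (k - 1), (‖a i‖ ^ 2 + ‖bseq k a i‖ ^ 2)) +
            Real.sqrt ((∑ i ∈ Finset.Icc (k - 2) (k - 1), (‖a i‖ ^ 2 - ‖bseq k a i‖ ^ 2)) ^ 2 +
              4 * ‖∑ i ∈ Finset.Icc (k - 2) (k - 1), a i * star (bseq k a i)‖ ^ 2)))) ^ 2) ^ 2 +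
         4 * (2 * (Real.sqrt ((1 / 2) * ((∑ i ∈ Finset.range (k - 2), (‖a i‖ ^ 2 + ‖bseq k a i‖ ^ 2)) +
            Real.sqrt ((∑ i ∈ Finset.range (k - 2), (‖a i‖ ^ 2 - ‖bseq k a i‖ ^ 2)) ^ 2 +
              4 * ‖∑ i ∈ Finset.range (k - 2), a i * star (bseq k a i)‖ ^ 2)))) *
            (Real.sqrt ((1 / 2) * ((∑ i ∈ Finset.Icc (k - 2) (k - 1), (‖a i‖ ^ 2 + ‖bseq k a i‖ ^ 2)) +
            Real.sqrt ((∑ i ∈ Finset.Icc (k - 2) (k - 1), (‖a i‖ ^ 2 - ‖bseq k a i‖ ^ 2)) ^ 2 +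
              4 * ‖∑ i ∈ Finset.Icc (k - 2) (k - 1), a i * star (bseq k a i)‖ ^ 2)))) + 1))))
      ^ ((1 : ℝ) / 4) := by
  refine zb_wrap ‖z‖ _ _ (norm_nonneg z) (Real.sqrt_nonneg _) (Real.sqrt_nonneg _) ?_
  intro ht1
  refine zb_step67 ‖z‖ _ _ k hk ht1 (Real.sqrt_nonneg _) (Real.sqrt_nonneg _) ?_
  have hu : ∀ (s : Finset ℕ), ∀ i ∈ s, ‖z ^ i‖ ≤ ‖z‖ ^ i :=
    fun s i _ => le_of_eq (norm_pow z i)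
  have KC1 := zb_key_cs (Finset.range (k-2)) a (bseq k a)
    (fun i => z ^ i) (fun i => ‖z‖ ^ i) (hu _)
  have KC2 := zb_key_cs (Finset.Icc (k-2) (k-1)) a (bseq k a)
    (fun i => z ^ i) (fun i => ‖z‖ ^ i) (hu _)
  have h0 : z ^ k = -(∑ i ∈ Finset.range k, a i * z ^ i) :=
    eq_neg_of_add_eq_zero_right hz
  have h1 : z ^ (k+1) = ∑ i ∈ Finset.range k, bseq k a i * z ^ i :=
    zb_hzk_eq k (by omega) a z hz
  have hsplA := zb_split_sum k hk (fun i => a i * z ^ i)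
  have hsplB := zb_split_sum k hk (fun i => bseq k a i * z ^ i)
  have htk : ‖z‖ ^ k ≤ ‖∑ i ∈ Finset.range (k-2), a i * z ^ i‖
      + ‖∑ i ∈ Finset.Icc (k-2) (k-1), a i * z ^ i‖ := by
    rw [← norm_pow, h0, norm_neg, hsplA]
    exact norm_add_le _ _
  have htk1 : ‖z‖ ^ (k+1) ≤ ‖∑ i ∈ Finset.range (k-2), bseq k a i * z ^ i‖
      + ‖∑ i ∈ Finset.Icc (k-2) (k-1), bseq k a i * z ^ i‖ := by
    rw [← norm_pow, h1, hsplB]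
    exact norm_add_le _ _
  calc Real.sqrt ((‖z‖^k)^2 + (‖z‖^(k+1))^2)
      ≤ Real.sqrt ((‖∑ i ∈ Finset.range (k-2), a i * z ^ i‖
            + ‖∑ i ∈ Finset.Icc (k-2) (k-1), a i * z ^ i‖)^2
          + (‖∑ i ∈ Finset.range (k-2), bseq k a i * z ^ i‖
            + ‖∑ i ∈ Finset.Icc (k-2) (k-1), bseq k a i * z ^ i‖)^2) := by
        apply Real.sqrt_le_sqrt
        have p1 := pow_le_pow_left₀ (by positivity) htk 2
        have p2 := pow_le_pow_left₀ (by positivity) htk1 2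
        exact add_le_add p1 p2
    _ ≤ Real.sqrt (‖∑ i ∈ Finset.range (k-2), a i * z ^ i‖^2
            + ‖∑ i ∈ Finset.range (k-2), bseq k a i * z ^ i‖^2)
        + Real.sqrt (‖∑ i ∈ Finset.Icc (k-2) (k-1), a i * z ^ i‖^2
            + ‖∑ i ∈ Finset.Icc (k-2) (k-1), bseq k a i * z ^ i‖^2) :=
        zb_mink4 _ _ _ _ (norm_nonneg _) (norm_nonneg _) (norm_nonneg _) (norm_nonneg _)
    _ ≤ Real.sqrt ((1/2) * ((∑ i ∈ Finset.range (k-2), (‖a i‖^2 + ‖bseq k a i‖^2)) +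
            Real.sqrt ((∑ i ∈ Finset.range (k-2), (‖a i‖^2 - ‖bseq k a i‖^2))^2
              + 4*‖∑ i ∈ Finset.range (k-2), a i * star (bseq k a i)‖^2)))
          * Real.sqrt (∑ i ∈ Finset.range (k-2), (‖z‖^i)^2)
        + Real.sqrt ((1/2) * ((∑ i ∈ Finset.Icc (k-2) (k-1), (‖a i‖^2 + ‖bseq k a i‖^2)) +
            Real.sqrt ((∑ i ∈ Finset.Icc (k-2) (k-1), (‖a i‖^2 - ‖bseq k a i‖^2))^2
              + 4*‖∑ i ∈ Finset.Icc (k-2) (k-1), a i * star (bseq k a i)‖^2)))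
          * Real.sqrt (∑ i ∈ Finset.Icc (k-2) (k-1), (‖z‖^i)^2) := add_le_add KC1 KC2
    _ = _ := by
        rw [zb_icc_sum k hk (fun i => (‖z‖^i)^2)]
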